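/- If every server in a majority W ⊆ S of a finite set S holds a tag ≥ t (lexicographic order on ℕ × I), and a writer computes maxTag as the maximum tag over a majority D ⊆ S, then the writer's new tag ⟨(maxTag).1 + 1, w⟩ is strictly greater than t. -/

import Mathlib

theorem write_tag_exceeds {α : Type*} {I : Type*} [DecidableEq α] [LinearOrder I]
    (S W D : Finset α) (tag : α → ℕ ×ₗ I) (t : ℕ ×ₗ I) (w : I)
    (hW : W ⊆ S) (hD : D ⊆ S)
    (hWmaj : 2 * W.card > S.card) (hDmaj : 2 * D.card > S.card)
    (hDne : D.Nonempty)
    (htag : ∀ s ∈ W, t ≤ tag s) :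
    t < toLex ((ofLex (D.sup' hDne tag)).1 + 1, w) := by
  have hinter : (W ∩ D).Nonempty := by
    rw [← Finset.card_pos]
    have hunion : (W ∪ D).card ≤ S.card := Finset.card_le_card (Finset.union_subset hW hD)
    have := Finset.card_union_add_card_inter W D
    omega
  obtain ⟨s, hs⟩ := hinter
  have hsW : s ∈ W := (Finset.mem_inter.mp hs).1
  have hsD : s ∈ D := (Finset.mem_inter.mp hs).2
  have h1 : t ≤ tag s := htag s hsW
  have h2 : tag s ≤ D.sup' hDne tag := Finset.le_sup' tag hsD
  have h3 : t ≤ D.sup' hDne tag := le_trans h1 h2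
  have h4 : t.1 ≤ (ofLex (D.sup' hDne tag)).1 := by
    rcases Prod.Lex.le_iff.mp h3 with h | ⟨h, _⟩
    · exact le_of_lt h
    · exact le_of_eq h
  exact Prod.Lex.lt_iff.mpr (Or.inl (by show t.1 < (ofLex (D.sup' hDne tag)).1 + 1; omega))
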